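/- Consider N ≥ 1 agents over a horizon T ≥ 1, with demands X_i^t ≥ 0 for agent i at step t such that S_i^t := Σ_{τ=t}^T X_i^τ > 0 for all i and t, weights w_i > 0, and budget B with 0 < B ≤ Σ_{i=1}^N S_i^1. Let Ã ∈ ℝ^N be a maximizer of Σ_{i=1}^N w_i·log Ã_i subject to 0 < Ã_i ≤ S_i^1 for all i and Σ_{i=1}^N Ã_i ≤ B (the hindsight Eisenberg–Gale program on total demands). For each agent i, define recursively C_i^1 = Ã_i, A_i^t = (X_i^t/S_i^t)·C_i^t, and C_i^{t+1} = C_i^t − A_i^t for t = 1, …, T. Then the resulting per-step allocations satisfy 0 ≤ A_i^t ≤ X_i^t for all i and t, and Σ_{t=1}^T A_i^t = Ã_i for every i; i.e., SAFFE-Oracle's allocations are a hindsight-optimal allocation: they respect every per-step demand constraint and their per-agent totals equal the Eisenberg–Gale hindsight solution. -/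

import Mathlib

open Finset

/-- Theorem 3 of the paper: SAFFE-Oracle achieves the hindsight-optimal allocation.
If `Ã` maximizes the hindsight Eisenberg–Gale program on total demands
`S_i 1 = ∑_{t=1}^T X_i t`, and each agent's allocation is split proportionally to
its known future demands (`C_i 1 = Ã_i`, `A_i t = (X_i t / S_i t) · C_i t`,
`C_i (t+1) = C_i t − A_i t`), then `0 ≤ A_i t ≤ X_i t` for all `i, t` and
`∑_{t=1}^T A_i t = Ã_i` for every agent `i`. -/
theorem saffe_oracle_matches_hindsight
    (N T : ℕ) (hN : 1 ≤ N) (hT : 1 ≤ T)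
    (X S : Fin N → ℕ → ℝ) (w : Fin N → ℝ) (B : ℝ)
    (hXnn : ∀ i t, 0 ≤ X i t)
    (hS : ∀ i t, S i t = ∑ τ ∈ Finset.Icc t T, X i τ)
    (hSpos : ∀ i, ∀ t ∈ Finset.Icc 1 T, 0 < S i t)
    (hw : ∀ i, 0 < w i)
    (hB : 0 < B) (hBle : B ≤ ∑ i, S i 1)
    (Atil : Fin N → ℝ)
    (hpos : ∀ i, 0 < Atil i) (hle : ∀ i, Atil i ≤ S i 1)
    (hsum : ∑ i, Atil i ≤ B)
    (hmax : ∀ A' : Fin N → ℝ, (∀ i, 0 < A' i) → (∀ i, A' i ≤ S i 1) →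
      (∑ i, A' i ≤ B) →
      ∑ i, w i * Real.log (A' i) ≤ ∑ i, w i * Real.log (Atil i))
    (A C : Fin N → ℕ → ℝ)
    (hC1 : ∀ i, C i 1 = Atil i)
    (hA : ∀ i, ∀ t ∈ Finset.Icc 1 T, A i t = (X i t / S i t) * C i t)
    (hC : ∀ i, ∀ t ∈ Finset.Icc 1 T, C i (t + 1) = C i t - A i t) :
    (∀ i, ∀ t ∈ Finset.Icc 1 T, 0 ≤ A i t ∧ A i t ≤ X i t) ∧
    (∀ i, ∑ t ∈ Finset.Icc 1 T, A i t = Atil i) := by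
  have hS1pos : ∀ i, 0 < S i 1 := fun i =>
    hSpos i 1 (Finset.mem_Icc.mpr ⟨le_refl 1, hT⟩)
  -- key invariant: C i t = (Atil i / S i 1) * S i t on [1,T]
  have hCinv : ∀ i, ∀ t, 1 ≤ t → t ≤ T → C i t = Atil i / S i 1 * S i t := by
    intro i t ht1
    induction t with
    | zero => omega
    | succ t ih =>
      intro htT
      rcases Nat.eq_or_lt_of_le ht1 with h1 | h1
      · rw [← h1, hC1]
        field_simp [(hS1pos i).ne']
      · have ht1' : 1 ≤ t := by omega
        have htT' : t ≤ T := by omega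
        have hmem : t ∈ Finset.Icc 1 T := Finset.mem_Icc.mpr ⟨ht1', htT'⟩
        have hCt := ih ht1' htT'
        have hStpos : 0 < S i t := hSpos i t hmem
        have hsplit : S i t = X i t + S i (t + 1) := by
          have hins : Finset.Icc t T = insert t (Finset.Icc (t + 1) T) := by
            ext x; simp only [Finset.mem_Icc, Finset.mem_insert]; omega
          rw [hS i t, hS i (t + 1), hins,
            Finset.sum_insert (by simp)]
        have h2 : S i (t + 1) = S i t - X i t := by linarith
        have hx : X i t / S i t * (Atil i / S i 1 * S i t)
            = Atil i / S i 1 * X i t := by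
          rw [mul_comm (Atil i / S i 1) (S i t), ← mul_assoc,
            div_mul_cancel₀ _ hStpos.ne']
          ring
        rw [hC i t hmem, hA i t hmem, hCt, hx, h2]
        ring
  have hAeq : ∀ i, ∀ t ∈ Finset.Icc 1 T, A i t = X i t * (Atil i / S i 1) := by
    intro i t hmem
    obtain ⟨ht1, htT⟩ := Finset.mem_Icc.mp hmem
    have hStpos : 0 < S i t := hSpos i t hmem
    rw [hA i t hmem, hCinv i t ht1 htT]
    field_simp [hStpos.ne', (hS1pos i).ne']
  have hratio : ∀ i, 0 < Atil i / S i 1 ∧ Atil i / S i 1 ≤ 1 := by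
    intro i
    constructor
    · exact div_pos (hpos i) (hS1pos i)
    · rw [div_le_one (hS1pos i)]; exact hle i
  constructor
  · intro i t hmem
    rw [hAeq i t hmem]
    obtain ⟨hr0, hr1⟩ := hratio i
    constructor
    · exact mul_nonneg (hXnn i t) (le_of_lt hr0)
    · nlinarith [hXnn i t]
  · intro i
    have : ∑ t ∈ Finset.Icc 1 T, A i t
        = ∑ t ∈ Finset.Icc 1 T, X i t * (Atil i / S i 1) :=
      Finset.sum_congr rfl (fun t ht => hAeq i t ht)
    rw [this, ← Finset.sum_mul, ← hS i 1,
      mul_div_assoc' (S i 1) (Atil i) (S i 1), mul_comm,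
      mul_div_assoc, div_self (hS1pos i).ne', mul_one]
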